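/- arXiv:2406.05922 — 5 statements merged into one kernel-verified Lean document; each statement's English description precedes it below -/
import Mathlib

section
/- Let ℓ ≥ 0 and Q ≥ 0 be integers and let 0 ≤ r ≤ 1. Then for every ρ ∈ ℝ, the Q-th derivative with respect to ρ of the function ρ ↦ j_ℓ(rρ) satisfies |(d^Q/dρ^Q) j_ℓ(rρ)| ≤ 1/√(2ℓ+1). -/
noncomputable section

open MeasureTheory Finset Real

/-- Legendre polynomial of degree `ℓ` (Rodrigues' formula). -/
def legendreP (ℓ : ℕ) : Polynomial ℝ :=
  Polynomial.C ((2 ^ ℓ * Nat.factorial ℓ : ℝ)⁻¹) *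
    Polynomial.derivative^[ℓ] ((Polynomial.X ^ 2 - 1) ^ ℓ)

/-- Spherical Bessel function of the first kind `j_ℓ`,
via the Poisson-type integral representation
`i^ℓ j_ℓ(z) = (1/2) ∫₀^π e^{iz cos θ} P_ℓ(cos θ) sin θ dθ`. -/
def sphBessel (ℓ : ℕ) (z : ℝ) : ℝ :=
  ((-Complex.I) ^ ℓ * (1 / 2) *
    ∫ θ in (0:ℝ)..Real.pi,
      Complex.exp (Complex.I * (z : ℂ) * (Real.cos θ : ℂ)) *
        (((legendreP ℓ).eval (Real.cos θ) * Real.sin θ : ℝ) : ℂ)).re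

/-- Bessel function of the first kind of order `ℓ + 1/2`:
`J_{ℓ+1/2}(r) = √(2r/π) j_ℓ(r)`. -/
def besselJhalf (ℓ : ℕ) (r : ℝ) : ℝ :=
  Real.sqrt (2 * r / Real.pi) * sphBessel ℓ r

/-- `lam` is the `k`-th positive root of `j_ℓ`. -/
def IsNthPosRoot (ℓ k : ℕ) (lam : ℝ) : Prop :=
  0 < lam ∧ sphBessel ℓ lam = 0 ∧
    {x | x ∈ Set.Ioo 0 lam ∧ sphBessel ℓ x = 0}.ncard = k - 1

/-- Normalization constant `c_{ℓk} = 2√λ/(√π |J'_{ℓ+1/2}(λ)|)`,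
written in terms of the root `lam = λ_{ℓk}`. -/
def normConst (ℓ : ℕ) (lam : ℝ) : ℝ :=
  2 * Real.sqrt lam / (Real.sqrt Real.pi * |deriv (besselJhalf ℓ) lam|)

/-- The point of `S² ⊆ ℝ³` with spherical angles `(θ, φ)`. -/
def sphPt (θ φ : ℝ) : EuclideanSpace ℝ (Fin 3) :=
  (EuclideanSpace.equiv (Fin 3) ℝ).symm
    ![Real.sin θ * Real.cos φ, Real.sin θ * Real.sin φ, Real.cos θ]

/-- Normalized spherical harmonic `Y_ℓ^m`, as a function of a unit vector `γ ∈ S²`: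
`Y_ℓ^m(γ) = √((ℓ-m)!(2ℓ+1)/(4π(ℓ+m)!)) e^{imφ} P_ℓ^m(cos θ)` where
`γ = (sin θ cos φ, sin θ sin φ, cos θ)` and `P_ℓ^m` is the associated Legendre
function of the first kind. -/
def sphY (ℓ : ℕ) (m : ℤ) (γ : EuclideanSpace ℝ (Fin 3)) : ℂ :=
  ((Real.sqrt (((((ℓ : ℤ) - m).toNat.factorial : ℝ) * (2 * ℓ + 1)) /
      (4 * Real.pi * (((ℓ : ℤ) + m).toNat.factorial : ℝ)))) : ℂ) *
  (if 0 ≤ m then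
      (-1 : ℂ) ^ m.toNat * ((γ 0 : ℂ) + Complex.I * (γ 1 : ℂ)) ^ m.toNat
    else
      ((((((ℓ : ℤ) + m).toNat.factorial : ℝ) / ((((ℓ : ℤ) - m).toNat.factorial : ℝ))) : ℝ) : ℂ) *
        ((γ 0 : ℂ) - Complex.I * (γ 1 : ℂ)) ^ (-m).toNat) *
  (((Polynomial.derivative^[m.natAbs] (legendreP ℓ)).eval (γ 2) : ℝ) : ℂ)

/-- The ball harmonic `ψ_{k,ℓ,m}(x) = c_{ℓk} j_ℓ(λ_{ℓk}‖x‖) Y_ℓ^m(x/‖x‖) χ_{[0,1)}(‖x‖)`,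
written in terms of the root `lam = λ_{ℓk}`. -/
def ballHarmonic (ℓ : ℕ) (m : ℤ) (lam : ℝ) (x : EuclideanSpace ℝ (Fin 3)) : ℂ :=
  ((normConst ℓ lam * sphBessel ℓ (lam * ‖x‖) : ℝ) : ℂ) *
    sphY ℓ m (‖x‖⁻¹ • x) * (if ‖x‖ < 1 then 1 else 0)

/-- Fourier transform of `f : ℝ³ → ℂ`, `f̂(ω) = ∫ f(x) e^{-i ω·x} dx`. -/
def ft3 (f : EuclideanSpace ℝ (Fin 3) → ℂ) (ω : EuclideanSpace ℝ (Fin 3)) : ℂ :=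
  ∫ x, f x * Complex.exp (-Complex.I * ((inner ℝ ω x : ℝ) : ℂ))

/-- Integral over `S²` with respect to the surface measure, in spherical coordinates. -/
def sphereIntegral (g : EuclideanSpace ℝ (Fin 3) → ℂ) : ℂ :=
  ∫ θ in (0:ℝ)..Real.pi, ∫ φ in (0:ℝ)..(2 * Real.pi),
    g (sphPt θ φ) * ((Real.sin θ : ℝ) : ℂ)

/-- `ε_u` in the Clenshaw–Curtis weights: `1/2` if `u ∈ {0, S}`, else `1`. -/
def quadEps (S u : ℕ) : ℝ := if u = 0 ∨ u = S then 1 / 2 else 1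

/-- Clenshaw–Curtis-type spherical quadrature weight `w_s` of order `S`. -/
def quadW (S s : ℕ) : ℝ :=
  4 * Real.pi * quadEps S s / (S : ℝ) ^ 2 *
    ∑ u ∈ Finset.range (S / 2 + 1),
      2 * quadEps S u / (1 - 4 * (u : ℝ) ^ 2) * Real.cos (2 * Real.pi * s * u / S)

/-- Spherical quadrature node `γ_{s,t}` of order `S`. -/
def quadNode (S s t : ℕ) : EuclideanSpace ℝ (Fin 3) :=
  sphPt (Real.pi * s / S) (2 * Real.pi * t / S)

/-- The `q`-th Chebyshev node of the first kind (out of `Q`) on `[a, b]`. -/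
def chebNode (a b : ℝ) (Q q : ℕ) : ℝ :=
  (b - a) / 2 * Real.cos ((2 * q + 1) / Q * (Real.pi / 2)) + (a + b) / 2

/-- Lagrange basis function `u_q` for the nodes `ρ 0, …, ρ (Q-1)`. -/
def lagrangeBasis (Q : ℕ) (ρ : ℕ → ℝ) (q : ℕ) (x : ℝ) : ℝ :=
  ∏ r ∈ (Finset.range Q).erase q, (x - ρ r) / (ρ q - ρ r)

/-- The Laplacian on `ℝ³`: sum of the three pure second partial derivatives. -/
def laplacian3 (f : EuclideanSpace ℝ (Fin 3) → ℂ) (x : EuclideanSpace ℝ (Fin 3)) : ℂ :=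
  ∑ i : Fin 3, iteratedDeriv 2 (fun t : ℝ => f (x + t • EuclideanSpace.single i (1:ℝ))) 0



section AuxLemmas
open Polynomial

private lemma aux_dvd (ℓ m : ℕ) (hm : m ≤ ℓ) :
    ((X:ℝ[X])^2 - 1)^(ℓ-m) ∣ derivative^[m] (((X:ℝ[X])^2-1)^ℓ) := by
  induction m with
  | zero => simp
  | succ m ih =>
    obtain ⟨q, hq⟩ := ih (le_of_lt (Nat.lt_of_succ_le hm))
    set k := ℓ - (m+1) with hk
    have h1 : ℓ - m = k + 1 := by omega
    rw [Function.iterate_succ_apply', hq, h1, derivative_mul, derivative_pow]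
    rw [Nat.add_sub_cancel]
    exact dvd_add ⟨C (((k:ℕ)+1 : ℕ) : ℝ) * derivative ((X:ℝ[X])^2-1) * q, by push_cast; ring⟩
      ⟨((X:ℝ[X])^2-1) * derivative q, by ring⟩

private lemma aux_eval_zero (ℓ m : ℕ) (hm : m < ℓ) (x : ℝ) (hx : x^2 = 1) :
    (derivative^[m] (((X:ℝ[X])^2-1)^ℓ)).eval x = 0 := by
  obtain ⟨q, hq⟩ := aux_dvd ℓ m (le_of_lt hm)
  set k := ℓ - m - 1 with hk
  have h1 : ℓ - m = k + 1 := by omega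
  rw [hq, h1]
  simp [hx]

private lemma aux_natDegree (ℓ : ℕ) : (((X:ℝ[X])^2-1)^ℓ).natDegree = 2*ℓ := by
  rw [natDegree_pow]
  have : ((X:ℝ[X])^2 - 1) = X^2 - C 1 := by rw [map_one]
  rw [this, natDegree_X_pow_sub_C]
  ring

private lemma aux_monic (ℓ : ℕ) : (((X:ℝ[X])^2-1)^ℓ).Monic := by
  have : ((X:ℝ[X])^2 - 1) = X^2 - C 1 := by rw [map_one]
  rw [this]
  exact (monic_X_pow_sub_C (1:ℝ) (by norm_num)).pow ℓ

private lemma aux_top (ℓ : ℕ) :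
    derivative^[2*ℓ] (((X:ℝ[X])^2-1)^ℓ) = C ((2*ℓ).factorial : ℝ) := by
  have hdeg : (derivative^[2*ℓ] (((X:ℝ[X])^2-1)^ℓ)).natDegree ≤ 0 := by
    refine (natDegree_iterate_derivative _ _).trans ?_
    rw [aux_natDegree]; omega
  rw [eq_C_of_natDegree_le_zero hdeg, coeff_iterate_derivative]
  simp only [zero_add, Nat.descFactorial_self]
  have : (((X:ℝ[X])^2-1)^ℓ).coeff (2*ℓ) = 1 := by
    have := (aux_monic ℓ).leadingCoeff
    rwa [leadingCoeff, aux_natDegree] at this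
  rw [this]
  simp

private lemma aux_ibp (ℓ j : ℕ) (hj : j < ℓ) :
    (∫ x in (-1:ℝ)..1, (derivative^[ℓ+j] (((X:ℝ[X])^2-1)^ℓ)).eval x *
      (derivative^[ℓ-j] (((X:ℝ[X])^2-1)^ℓ)).eval x)
    = - ∫ x in (-1:ℝ)..1, (derivative^[ℓ+j+1] (((X:ℝ[X])^2-1)^ℓ)).eval x *
      (derivative^[ℓ-(j+1)] (((X:ℝ[X])^2-1)^ℓ)).eval x := by
  set p := ((X:ℝ[X])^2-1)^ℓ with hp
  have h1 : ℓ - j = (ℓ - (j+1)) + 1 := by omega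
  have hu : ∀ x ∈ Set.Ioo (min (-1:ℝ) 1) (max (-1:ℝ) 1),
      HasDerivAt (fun x => (derivative^[ℓ+j] p).eval x)
        ((derivative^[ℓ+j+1] p).eval x) x := by
    intro x _
    rw [Function.iterate_succ_apply']
    exact (derivative^[ℓ+j] p).hasDerivAt x
  have hv : ∀ x ∈ Set.Ioo (min (-1:ℝ) 1) (max (-1:ℝ) 1),
      HasDerivAt (fun x => (derivative^[ℓ-(j+1)] p).eval x)
        ((derivative^[ℓ-j] p).eval x) x := by
    intro x _
    rw [h1, Function.iterate_succ_apply']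
    exact (derivative^[ℓ-(j+1)] p).hasDerivAt x
  have key := intervalIntegral.integral_mul_deriv_eq_deriv_mul_of_hasDerivAt
    ((derivative^[ℓ+j] p).continuous.continuousOn)
    ((derivative^[ℓ-(j+1)] p).continuous.continuousOn)
    hu hv
    ((derivative^[ℓ+j+1] p).continuous.intervalIntegrable _ _)
    ((derivative^[ℓ-j] p).continuous.intervalIntegrable _ _)
  rw [key, aux_eval_zero ℓ (ℓ-(j+1)) (by omega) 1 (by norm_num),
    aux_eval_zero ℓ (ℓ-(j+1)) (by omega) (-1) (by norm_num)]
  ring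

private lemma aux_chain (ℓ : ℕ) (j : ℕ) (hj : j ≤ ℓ) :
    (∫ x in (-1:ℝ)..1, ((derivative^[ℓ] (((X:ℝ[X])^2-1)^ℓ)).eval x)^2)
    = (-1:ℝ)^j * ∫ x in (-1:ℝ)..1, (derivative^[ℓ+j] (((X:ℝ[X])^2-1)^ℓ)).eval x *
        (derivative^[ℓ-j] (((X:ℝ[X])^2-1)^ℓ)).eval x := by
  induction j with
  | zero => simp [sq]
  | succ j ih =>
    rw [ih (by omega), aux_ibp ℓ j (by omega)]
    ring

private lemma aux_wallis (ℓ : ℕ) :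
    (∫ x in (-1:ℝ)..1, (1-x^2)^ℓ) = 2 * ∏ i ∈ range ℓ, (2*(i:ℝ)+2)/(2*i+3) := by
  have hsub := intervalIntegral.integral_comp_smul_deriv
    (a := (0:ℝ)) (b := Real.pi) (f := Real.cos) (f' := fun x => -Real.sin x)
    (g := fun y => (1-y^2)^ℓ)
    (fun x _ => Real.hasDerivAt_cos x) (by fun_prop) (by fun_prop)
  rw [Real.cos_zero, Real.cos_pi] at hsub
  have heq : (fun θ => (-Real.sin θ) • ((fun y => (1-y^2)^ℓ) ∘ Real.cos) θ)
      = fun θ => -(Real.sin θ ^ (2*ℓ+1)) := by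
    funext θ
    simp only [Function.comp, smul_eq_mul, ← Real.sin_sq]
    ring
  rw [heq] at hsub
  rw [intervalIntegral.integral_symm (-1:ℝ) 1] at hsub
  rw [intervalIntegral.integral_neg] at hsub
  have := integral_sin_pow_odd (n := ℓ)
  linarith [hsub, this]

private lemma aux_arith (ℓ : ℕ) :
    ((2*ℓ).factorial : ℝ) * (2 * ∏ i ∈ range ℓ, (2*(i:ℝ)+2)/(2*i+3))
      = 2/(2*ℓ+1) * (2^ℓ * ℓ.factorial)^2 := by
  induction ℓ with
  | zero => norm_num
  | succ n ih =>
    have h2 : (2*(n:ℝ)+1) ≠ 0 := by positivity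
    have h3 : (2*(n:ℝ)+3) ≠ 0 := by positivity
    have hfac : (((2*(n+1)).factorial : ℕ) : ℝ)
        = (2*(n:ℝ)+2)*(2*(n:ℝ)+1)*(((2*n).factorial : ℕ) : ℝ) := by
      have h1 : 2*(n+1) = (2*n+1)+1 := by ring
      rw [h1, Nat.factorial_succ, Nat.factorial_succ]
      push_cast; ring
    rw [prod_range_succ, hfac]
    have hgoal : (2*(n:ℝ)+2)*(2*(n:ℝ)+1)*(((2*n).factorial : ℕ) : ℝ) *
        (2 * ((∏ i ∈ range n, (2*(i:ℝ)+2)/(2*i+3)) * ((2*(n:ℝ)+2)/(2*(n:ℝ)+3))))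
        = (2*(n:ℝ)+2)*(2*(n:ℝ)+1)*((2*(n:ℝ)+2)/(2*(n:ℝ)+3)) *
          ((((2*n).factorial : ℕ) : ℝ) * (2 * ∏ i ∈ range n, (2*(i:ℝ)+2)/(2*i+3))) := by
      ring
    rw [hgoal, ih]
    rw [Nat.factorial_succ]
    push_cast
    field_simp
    ring

private lemma aux_legendre_sq (ℓ : ℕ) :
    (∫ x in (-1:ℝ)..1, ((legendreP ℓ).eval x)^2) = 2/(2*(ℓ:ℝ)+1) := by
  have hc : ((2:ℝ)^ℓ * ℓ.factorial) ≠ 0 := by positivity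
  have h1 : ∀ x : ℝ, ((legendreP ℓ).eval x)^2
      = (((2:ℝ)^ℓ * ℓ.factorial)⁻¹)^2 *
        ((derivative^[ℓ] (((X:ℝ[X])^2-1)^ℓ)).eval x)^2 := by
    intro x; simp only [legendreP, eval_mul, eval_C]; ring
  simp only [h1]
  rw [intervalIntegral.integral_const_mul]
  have h3 : (∫ x in (-1:ℝ)..1, ((derivative^[ℓ] (((X:ℝ[X])^2-1)^ℓ)).eval x)^2)
      = ((2*ℓ).factorial : ℝ) * ∫ x in (-1:ℝ)..1, (1-x^2)^ℓ := by
    rw [aux_chain ℓ ℓ le_rfl, show ℓ+ℓ = 2*ℓ by ring, Nat.sub_self, aux_top]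
    have hint : ∀ x : ℝ, (C ((2*ℓ).factorial : ℝ)).eval x *
        (derivative^[0] (((X:ℝ[X])^2-1)^ℓ)).eval x
        = ((2*ℓ).factorial : ℝ) * ((-1:ℝ)^ℓ * (1-x^2)^ℓ) := by
      intro x
      have hx : (x^2-1:ℝ)^ℓ = (-1:ℝ)^ℓ * (1-x^2)^ℓ := by
        rw [show (x^2-1:ℝ) = -(1-x^2) by ring, neg_pow]
      simp only [Function.iterate_zero_apply, eval_C, eval_pow, eval_sub, eval_one, eval_X]
      rw [hx]
    simp only [hint]
    rw [intervalIntegral.integral_const_mul, intervalIntegral.integral_const_mul]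
    have : ((-1:ℝ))^ℓ * (-1:ℝ)^ℓ = 1 := by rw [← mul_pow]; norm_num
    calc (-1:ℝ)^ℓ * (((2*ℓ).factorial : ℝ) * ((-1:ℝ)^ℓ * ∫ x in (-1:ℝ)..1, (1-x^2)^ℓ))
        = ((-1:ℝ)^ℓ * (-1:ℝ)^ℓ) * (((2*ℓ).factorial : ℝ) * ∫ x in (-1:ℝ)..1, (1-x^2)^ℓ) := by
          ring
      _ = ((2*ℓ).factorial : ℝ) * ∫ x in (-1:ℝ)..1, (1-x^2)^ℓ := by rw [this]; ring
  rw [h3, aux_wallis, aux_arith]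
  field_simp

private lemma aux_cs (ℓ : ℕ) :
    (∫ x in (-1:ℝ)..1, |(legendreP ℓ).eval x|) ≤ 2 / Real.sqrt (2*(ℓ:ℝ)+1) := by
  set B := ∫ x in (-1:ℝ)..1, |(legendreP ℓ).eval x| with hB
  have hcont : Continuous fun x : ℝ => (legendreP ℓ).eval x := (legendreP ℓ).continuous
  have hBnn : 0 ≤ B :=
    intervalIntegral.integral_nonneg (by norm_num) (fun x _ => abs_nonneg _)
  have hsq : 0 ≤ ∫ x in (-1:ℝ)..1, (|(legendreP ℓ).eval x| - B/2)^2 :=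
    intervalIntegral.integral_nonneg (by norm_num) (fun x _ => sq_nonneg _)
  have hexp : (∫ x in (-1:ℝ)..1, (|(legendreP ℓ).eval x| - B/2)^2)
      = (∫ x in (-1:ℝ)..1, ((legendreP ℓ).eval x)^2) - B*B + (B/2)^2*2 := by
    have heq : (fun x => (|(legendreP ℓ).eval x| - B/2)^2)
        = fun x => (((legendreP ℓ).eval x)^2 - B * |(legendreP ℓ).eval x|) + (B/2)^2 := by
      funext x; rw [sub_sq, sq_abs]; ring
    rw [heq, intervalIntegral.integral_add, intervalIntegral.integral_sub,
      intervalIntegral.integral_const_mul, intervalIntegral.integral_const]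
    · rw [← hB]; simp; ring
    · exact ((hcont.pow 2).intervalIntegrable _ _)
    · exact ((continuous_const.mul hcont.abs).intervalIntegrable _ _)
    · exact (((hcont.pow 2).sub (continuous_const.mul hcont.abs)).intervalIntegrable _ _)
    · exact intervalIntegrable_const
  rw [hexp, aux_legendre_sq] at hsq
  have hpos : (0:ℝ) < 2*(ℓ:ℝ)+1 := by positivity
  clear_value B
  have h24 : (4:ℝ)/(2*(ℓ:ℝ)+1) = 2*(2/(2*(ℓ:ℝ)+1)) := by ring
  have h2 : B^2 ≤ 4/(2*(ℓ:ℝ)+1) := by rw [h24]; nlinarith [hsq]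
  have h4 : B ≤ Real.sqrt (4/(2*(ℓ:ℝ)+1)) := by
    rw [show B = Real.sqrt (B^2) by rw [Real.sqrt_sq hBnn]]
    exact Real.sqrt_le_sqrt h2
  calc B ≤ Real.sqrt (4/(2*(ℓ:ℝ)+1)) := h4
    _ = 2 / Real.sqrt (2*(ℓ:ℝ)+1) := by
      rw [Real.sqrt_div (by norm_num : (0:ℝ) ≤ 4), show (4:ℝ) = 2^2 by norm_num,
        Real.sqrt_sq (by norm_num : (0:ℝ) ≤ 2)]

private lemma aux_subst (g : ℝ → ℝ) (hg : Continuous g) :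
    (∫ θ in (0:ℝ)..π, Real.sin θ * g (Real.cos θ)) = ∫ x in (-1:ℝ)..1, g x := by
  have h := intervalIntegral.integral_comp_smul_deriv (a := 0) (b := π) (f := Real.cos)
    (f' := fun x => -Real.sin x) (g := g) (fun x _ => Real.hasDerivAt_cos x) (by fun_prop) hg
  rw [Real.cos_zero, Real.cos_pi, intervalIntegral.integral_symm (-1:ℝ) 1] at h
  have heq : (fun θ => (-Real.sin θ) • ((g ∘ Real.cos) θ))
      = fun θ => -(Real.sin θ * g (Real.cos θ)) := by
    funext θ; simp [Function.comp, mul_comm]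
  rw [heq, intervalIntegral.integral_neg, neg_inj] at h
  exact h

private lemma aux_hasDerivAt_re {f : ℝ → ℂ} {f' : ℂ} {x : ℝ} (h : HasDerivAt f f' x) :
    HasDerivAt (fun t => (f t).re) f'.re x := by
  have := (Complex.reCLM.hasFDerivAt (x := f x)).comp x h.hasFDerivAt
  exact (Complex.reCLM.hasFDerivAt (x := f x)).comp_hasDerivAt x h

private lemma aux_g_cont (p : Polynomial ℝ) (c : ℝ) (Q : ℕ) (x : ℝ) :
    Continuous fun θ : ℝ => (Complex.I*(c:ℂ)*(Real.cos θ:ℂ))^Q *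
      Complex.exp ((Complex.I*(c:ℂ)*(Real.cos θ:ℂ)) * (x:ℂ)) *
      ((p.eval (Real.cos θ) * Real.sin θ : ℝ) : ℂ) := by
  fun_prop

private lemma aux_g_norm (p : Polynomial ℝ) {c : ℝ} (hc0 : 0 ≤ c) (hc1 : c ≤ 1) (Q : ℕ)
    (x θ : ℝ) :
    ‖(Complex.I*(c:ℂ)*(Real.cos θ:ℂ))^Q *
      Complex.exp ((Complex.I*(c:ℂ)*(Real.cos θ:ℂ)) * (x:ℂ)) *
      ((p.eval (Real.cos θ) * Real.sin θ : ℝ) : ℂ)‖ ≤ |p.eval (Real.cos θ) * Real.sin θ| := by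
  rw [norm_mul, norm_mul, norm_pow]
  have h1 : ‖Complex.I*(c:ℂ)*(Real.cos θ:ℂ)‖ ≤ 1 := by
    rw [norm_mul, norm_mul, Complex.norm_I, one_mul, Complex.norm_real, Complex.norm_real]
    rw [Real.norm_eq_abs, Real.norm_eq_abs, abs_of_nonneg hc0]
    calc c * |Real.cos θ| ≤ 1 * 1 :=
      mul_le_mul hc1 (Real.abs_cos_le_one θ) (abs_nonneg _) zero_le_one
    _ = 1 := by norm_num
  have h2 : ‖Complex.exp ((Complex.I*(c:ℂ)*(Real.cos θ:ℂ)) * (x:ℂ))‖ = 1 := by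
    have harg : (Complex.I*(c:ℂ)*(Real.cos θ:ℂ)) * (x:ℂ)
        = ((c * Real.cos θ * x : ℝ) : ℂ) * Complex.I := by push_cast; ring
    rw [harg, Complex.norm_exp]
    simp
  have h3 : ‖((p.eval (Real.cos θ) * Real.sin θ : ℝ) : ℂ)‖
      = |p.eval (Real.cos θ) * Real.sin θ| := by
    rw [Complex.norm_real, Real.norm_eq_abs]
  rw [h2, h3, mul_one]
  calc ‖Complex.I*(c:ℂ)*(Real.cos θ:ℂ)‖^Q * |p.eval (Real.cos θ) * Real.sin θ|
      ≤ 1^Q * |p.eval (Real.cos θ) * Real.sin θ| := by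
        gcongr
    _ = _ := by norm_num

end AuxLemmas

/-- For `0 ≤ r ≤ 1`, the `Q`-th derivative of `ρ ↦ j_ℓ(rρ)` is bounded
by `1/√(2ℓ+1)`. -/
theorem deriv_sphBessel_bound (ℓ Q : ℕ) (r : ℝ) (hr0 : 0 ≤ r) (hr1 : r ≤ 1) (ρ : ℝ) :
    |iteratedDeriv Q (fun t : ℝ => sphBessel ℓ (r * t)) ρ| ≤ 1 / Real.sqrt (2 * ℓ + 1) := by
  set g : ℕ → ℝ → ℝ → ℂ := fun Q x θ => (Complex.I*(r:ℂ)*(Real.cos θ:ℂ))^Q *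
      Complex.exp ((Complex.I*(r:ℂ)*(Real.cos θ:ℂ)) * (x:ℂ)) *
      (((legendreP ℓ).eval (Real.cos θ) * Real.sin θ : ℝ) : ℂ) with hg
  have hcont : ∀ Q x, Continuous fun θ => g Q x θ := fun Q x => aux_g_cont (legendreP ℓ) r Q x
  have hnorm : ∀ Q x θ, ‖g Q x θ‖ ≤ |(legendreP ℓ).eval (Real.cos θ) * Real.sin θ| :=
    fun Q x θ => aux_g_norm (legendreP ℓ) hr0 hr1 Q x θ
  have hbndc : Continuous fun θ => |(legendreP ℓ).eval (Real.cos θ) * Real.sin θ| := by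
    fun_prop
  have hder : ∀ Q x θ, HasDerivAt (fun x => g Q x θ) (g (Q+1) x θ) x := by
    intro Q x θ
    set cc : ℂ := Complex.I*(r:ℂ)*(Real.cos θ:ℂ) with hcc
    have h1 : HasDerivAt (fun z : ℂ => Complex.exp (cc * z)) (cc * Complex.exp (cc * x)) (x:ℂ) := by
      have h0 := (Complex.hasDerivAt_exp (cc * x)).comp (x:ℂ)
        ((hasDerivAt_id (x:ℂ)).const_mul cc)
      simp only [Function.comp_def, mul_one] at h0
      exact h0.congr_deriv (by ring)
    have h2 := h1.comp_ofReal
    have h3 := (h2.const_mul (cc^Q)).mul_const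
      ((((legendreP ℓ).eval (Real.cos θ) * Real.sin θ : ℝ)) : ℂ)
    refine h3.congr_deriv ?_
    simp only [hg, pow_succ]
    ring
  set intg : ℕ → ℝ → ℂ := fun Q x => ∫ θ in (0:ℝ)..π, g Q x θ with hintg
  have hkey : ∀ Q x, HasDerivAt (intg Q) (intg (Q+1) x) x := by
    intro Q x
    exact (intervalIntegral.hasDerivAt_integral_of_dominated_loc_of_deriv_le
      (F := fun x θ => g Q x θ) (F' := fun x θ => g (Q+1) x θ) (x₀ := x)
      (bound := fun θ => |(legendreP ℓ).eval (Real.cos θ) * Real.sin θ|) (a := 0) (b := π)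
      (μ := volume) (s := Set.univ) Filter.univ_mem
      (Filter.Eventually.of_forall fun y => (hcont Q y).aestronglyMeasurable)
      ((hcont Q x).intervalIntegrable _ _)
      ((hcont (Q+1) x).aestronglyMeasurable)
      (Filter.Eventually.of_forall fun θ _ y _ => hnorm (Q+1) y θ)
      (hbndc.intervalIntegrable _ _)
      (Filter.Eventually.of_forall fun θ _ y _ => hder Q y θ)).2
  have hiter : ∀ Q, iteratedDeriv Q (fun t : ℝ => sphBessel ℓ (r * t))
      = fun x => ((-Complex.I)^ℓ * (1/2) * intg Q x).re := by
    intro Q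
    induction Q with
    | zero =>
      rw [iteratedDeriv_zero]
      funext x
      have heq : ∀ θ : ℝ, Complex.exp (Complex.I * ((r*x : ℝ):ℂ) * (Real.cos θ:ℂ)) *
          (((legendreP ℓ).eval (Real.cos θ) * Real.sin θ : ℝ) : ℂ) = g 0 x θ := by
        intro θ
        simp only [hg, pow_zero, one_mul]
        congr 2
        push_cast
        ring
      simp only [sphBessel, hintg, heq]
    | succ Q ih =>
      rw [iteratedDeriv_succ, ih]
      funext x
      exact (aux_hasDerivAt_re ((hkey Q x).const_mul ((-Complex.I)^ℓ * (1/2)))).deriv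
  rw [hiter Q]
  have hsin : (∫ θ in (0:ℝ)..π, |(legendreP ℓ).eval (Real.cos θ) * Real.sin θ|)
      = ∫ θ in (0:ℝ)..π, Real.sin θ * |(legendreP ℓ).eval (Real.cos θ)| := by
    apply intervalIntegral.integral_congr
    intro θ hθ
    rw [Set.uIcc_of_le Real.pi_pos.le] at hθ
    have hs : 0 ≤ Real.sin θ := Real.sin_nonneg_of_nonneg_of_le_pi hθ.1 hθ.2
    dsimp only
    rw [abs_mul, abs_of_nonneg hs]
    ring
  have hIb : ‖intg Q ρ‖ ≤ 2 / Real.sqrt (2*(ℓ:ℝ)+1) := by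
    have h1 := intervalIntegral.norm_integral_le_abs_of_norm_le
        (f := fun θ => g Q ρ θ) (a := 0) (b := π) (μ := volume)
        (g := fun θ => |(legendreP ℓ).eval (Real.cos θ) * Real.sin θ|)
        (Filter.Eventually.of_forall fun θ => hnorm Q ρ θ) (hbndc.intervalIntegrable _ _)
    have h2 : (0:ℝ) ≤ ∫ θ in (0:ℝ)..π, |(legendreP ℓ).eval (Real.cos θ) * Real.sin θ| :=
      intervalIntegral.integral_nonneg Real.pi_pos.le (fun x _ => abs_nonneg _)
    rw [abs_of_nonneg h2] at h1
    refine h1.trans ?_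
    rw [hsin, aux_subst (fun y => |(legendreP ℓ).eval y|) (by fun_prop)]
    exact aux_cs ℓ
  show |((-Complex.I)^ℓ * (1/2) * intg Q ρ).re| ≤ 1 / Real.sqrt (2 * ℓ + 1)
  calc |((-Complex.I)^ℓ * (1/2) * intg Q ρ).re|
      ≤ ‖(-Complex.I)^ℓ * (1/2) * intg Q ρ‖ := Complex.abs_re_le_norm _
    _ = (1/2) * ‖intg Q ρ‖ := by
        rw [norm_mul, norm_mul, norm_pow, norm_neg, Complex.norm_I, one_pow, one_mul]
        norm_num
    _ ≤ (1/2) * (2 / Real.sqrt (2*(ℓ:ℝ)+1)) := by gcongr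
    _ = 1 / Real.sqrt (2 * ℓ + 1) := by ring

end
end

section
/- Let z ≥ 0 be real and let S ≥ 18 be an integer with S ≥ 2ez, and let ℓ be an integer with 0 ≤ ℓ ≤ S. Then (28/27) · √(2ℓ+1) · Σ_{ℓ' = ⌊S/2⌋+1}^{∞} (2ℓ'+1)^{3/2} · ( e z / (2ℓ'+3) )^{ℓ'} ≤ 27.6 · 2^{−S/4}. -/
noncomputable section

open MeasureTheory Finset Real

lemma cube_aux (t : ℝ) (ht : 21 ≤ t) : ∀ j : ℕ, (t + 2*j)^3 ≤ t^3 * 2^j := by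
  intro j
  induction j with
  | zero => simp
  | succ n ih =>
    have hu : (21:ℝ) ≤ t + 2*n := by
      have : (0:ℝ) ≤ (n:ℝ) := Nat.cast_nonneg n
      linarith
    have h1 : (t + 2*((n:ℕ)+1:ℕ))^3 ≤ 2 * (t + 2*(n:ℝ))^3 := by
      push_cast
      nlinarith [mul_nonneg (sub_nonneg.2 hu) (sq_nonneg (t+2*(n:ℝ))),
        mul_nonneg (sub_nonneg.2 hu) (sub_nonneg.2 hu)]
    calc (t + 2*((n:ℕ)+1:ℕ))^3 ≤ 2*(t+2*(n:ℝ))^3 := h1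
      _ ≤ 2*(t^3*2^n) := by linarith
      _ = t^3 * 2^(n+1) := by ring

lemma pow8_aux (S : ℕ) (hS : 18 ≤ S) : ((S:ℝ)+5)^8 ≤ 390625 * 2^S := by
  induction S, hS using Nat.le_induction with
  | base => norm_num
  | succ n hn ih =>
    have h23 : (23:ℝ) ≤ (n:ℝ)+5 := by
      have : (18:ℝ) ≤ (n:ℝ) := by exact_mod_cast hn
      linarith
    have h1 : ((n:ℝ)+1+5) ≤ (24/23) * ((n:ℝ)+5) := by linarith
    have h2 : ((n:ℕ)+1+5:ℝ)^8 ≤ ((24/23)*((n:ℝ)+5))^8 := by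
      exact pow_le_pow_left₀ (by linarith) h1 8
    calc ((↑(n+1):ℝ)+5)^8 = ((n:ℕ)+1+5:ℝ)^8 := by push_cast; ring
      _ ≤ ((24/23)*((n:ℝ)+5))^8 := h2
      _ = (24/23)^8 * ((n:ℝ)+5)^8 := by rw [mul_pow]
      _ ≤ 2 * ((n:ℝ)+5)^8 := by nlinarith [pow_nonneg (by linarith : (0:ℝ) ≤ (n:ℝ)+5) 8]
      _ ≤ 2 * (390625 * 2^n) := by linarith
      _ = 390625 * 2^(n+1) := by ring


set_option maxHeartbeats 1000000 in
/-- Tail bound: for `z ≥ 0`, `S ≥ 18` with `S ≥ 2ez`, and `0 ≤ ℓ ≤ S`,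
`(28/27)√(2ℓ+1) Σ_{ℓ' > ⌊S/2⌋} (2ℓ'+1)^{3/2} (ez/(2ℓ'+3))^{ℓ'} ≤ 27.6 · 2^{-S/4}`. -/
theorem tail_sum_bound (z : ℝ) (hz : 0 ≤ z) (S : ℕ) (hS : 18 ≤ S)
    (hSz : 2 * Real.exp 1 * z ≤ (S : ℝ)) (ℓ : ℕ) (hℓ : ℓ ≤ S) :
    28 / 27 * Real.sqrt (2 * ℓ + 1) *
      (∑' j : ℕ, (2 * ((S / 2 + 1 + j : ℕ) : ℝ) + 1) ^ ((3:ℝ)/2) *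
        (Real.exp 1 * z / (2 * ((S / 2 + 1 + j : ℕ) : ℝ) + 3)) ^ (S / 2 + 1 + j)) ≤
    27.6 * (2:ℝ) ^ (-(S : ℝ) / 4) := by
  have hz' : (0:ℝ) ≤ Real.exp 1 * z := by positivity
  set M : ℕ := S / 2 with hMdef
  have hM9 : 9 ≤ M := by omega
  have hS2M : S ≤ 2 * M + 1 := by omega
  have h2MS : 2 * M ≤ S := by omega
  have hMr : (9:ℝ) ≤ (M:ℝ) := by exact_mod_cast hM9
  have hSr : (18:ℝ) ≤ (S:ℝ) := by exact_mod_cast hS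
  have hS2Mr : (S:ℝ) ≤ 2*(M:ℝ)+1 := by exact_mod_cast hS2M
  have h2MSr : 2*(M:ℝ) ≤ (S:ℝ) := by exact_mod_cast h2MS
  have hez : Real.exp 1 * z ≤ (S:ℝ)/2 := by linarith
  set ρ : ℝ := ((S:ℝ)/2) / ((S:ℝ)+4) with hρdef
  have hρ0 : 0 ≤ ρ := by positivity
  have hρh : ρ ≤ 1/2 := by
    rw [hρdef, div_le_iff₀ (by linarith)]; linarith
  set x0 : ℝ := 2*(M:ℝ)+3 with hx0def
  have hx0 : (21:ℝ) ≤ x0 := by rw [hx0def]; linarith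
  have hx0n : (0:ℝ) ≤ x0 := by linarith
  set r : ℝ := Real.sqrt 2 / 2 with hrdef
  have hsqrt2 : Real.sqrt 2 ≤ 1.41422 := by
    nlinarith [Real.sq_sqrt (by norm_num : (0:ℝ) ≤ 2), Real.sqrt_nonneg 2]
  have hsqrt2' : (0:ℝ) ≤ Real.sqrt 2 := Real.sqrt_nonneg 2
  have hr0 : 0 ≤ r := by positivity
  have hr1 : r < 1 := by rw [hrdef]; nlinarith
  set C : ℝ := x0 ^ ((3:ℝ)/2) * ρ ^ (M+1) with hCdef
  have hC0 : 0 ≤ C := by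
    exact mul_nonneg (Real.rpow_nonneg hx0n _) (pow_nonneg hρ0 _)
  have key : ∀ j : ℕ,
      (2 * ((M + 1 + j : ℕ) : ℝ) + 1) ^ ((3:ℝ)/2) *
        (Real.exp 1 * z / (2 * ((M + 1 + j : ℕ) : ℝ) + 3)) ^ (M + 1 + j) ≤ C * r ^ j := by
    intro j
    have hj0 : (0:ℝ) ≤ (j:ℝ) := Nat.cast_nonneg j
    have hcast : ((M + 1 + j : ℕ) : ℝ) = (M:ℝ) + 1 + (j:ℝ) := by push_cast; ring
    have hxj : 2 * ((M + 1 + j : ℕ) : ℝ) + 1 = x0 + 2*(j:ℝ) := by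
      rw [hcast, hx0def]; ring
    have hxj0 : (0:ℝ) ≤ x0 + 2*(j:ℝ) := by linarith
    have hB0 : (0:ℝ) ≤ x0 ^ ((3:ℝ)/2) * (Real.sqrt 2)^j :=
      mul_nonneg (Real.rpow_nonneg hx0n _) (pow_nonneg hsqrt2' _)
    have hT1 : (x0 + 2*(j:ℝ)) ^ ((3:ℝ)/2) ≤ x0 ^ ((3:ℝ)/2) * (Real.sqrt 2)^j := by
      have hl : ((x0 + 2*(j:ℝ)) ^ ((3:ℝ)/2))^(2:ℕ) = (x0+2*(j:ℝ))^(3:ℕ) := by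
        rw [← Real.rpow_natCast ((x0 + 2*(j:ℝ)) ^ ((3:ℝ)/2)) 2, ← Real.rpow_mul hxj0,
          show (3:ℝ)/2 * ((2:ℕ):ℝ) = ((3:ℕ):ℝ) by push_cast; ring, Real.rpow_natCast]
      have hrr : (x0 ^ ((3:ℝ)/2) * (Real.sqrt 2)^j)^(2:ℕ) = x0^(3:ℕ) * 2^j := by
        rw [mul_pow, pow_right_comm, Real.sq_sqrt (by norm_num : (0:ℝ) ≤ 2),
          ← Real.rpow_natCast (x0 ^ ((3:ℝ)/2)) 2, ← Real.rpow_mul hx0n,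
          show (3:ℝ)/2 * ((2:ℕ):ℝ) = ((3:ℕ):ℝ) by push_cast; ring, Real.rpow_natCast]
      have hboth : ((x0 + 2*(j:ℝ)) ^ ((3:ℝ)/2))^(2:ℕ) ≤ (x0 ^ ((3:ℝ)/2) * (Real.sqrt 2)^j)^(2:ℕ) := by
        rw [hl, hrr]; exact cube_aux x0 hx0 j
      exact le_of_pow_le_pow_left₀ (by norm_num) hB0 hboth
    have hden : (S:ℝ) + 4 ≤ 2*((M+1+j:ℕ):ℝ) + 3 := by
      rw [hcast]; linarith
    have hdenpos : (0:ℝ) < 2*((M+1+j:ℕ):ℝ) + 3 := by linarith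
    have hbase0 : 0 ≤ Real.exp 1 * z / (2*((M+1+j:ℕ):ℝ)+3) :=
      div_nonneg hz' (le_of_lt hdenpos)
    have hbase : Real.exp 1 * z / (2*((M+1+j:ℕ):ℝ)+3) ≤ ρ := by
      rw [hρdef]
      exact div_le_div₀ (by positivity) hez (by linarith) hden
    have hT2 : (Real.exp 1 * z / (2*((M+1+j:ℕ):ℝ)+3)) ^ (M+1+j) ≤ ρ^(M+1) * ρ^j := by
      rw [← pow_add]
      exact pow_le_pow_left₀ hbase0 hbase _
    calc (2 * ((M + 1 + j : ℕ) : ℝ) + 1) ^ ((3:ℝ)/2) *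
        (Real.exp 1 * z / (2 * ((M + 1 + j : ℕ) : ℝ) + 3)) ^ (M + 1 + j)
        ≤ (x0 ^ ((3:ℝ)/2) * (Real.sqrt 2)^j) * (ρ^(M+1) * ρ^j) := by
          rw [hxj]
          exact mul_le_mul hT1 hT2 (pow_nonneg hbase0 _) hB0
      _ = C * ((Real.sqrt 2 * ρ)^j) := by rw [hCdef, mul_pow]; ring
      _ ≤ C * r^j := by
          apply mul_le_mul_of_nonneg_left _ hC0
          apply pow_le_pow_left₀ (by positivity) _ j
          rw [hrdef]; nlinarith
  have hgs : Summable (fun j : ℕ => C * r ^ j) :=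
    (summable_geometric_of_lt_one hr0 hr1).mul_left C
  have hnn : ∀ j : ℕ, 0 ≤ (2 * ((M + 1 + j : ℕ) : ℝ) + 1) ^ ((3:ℝ)/2) *
      (Real.exp 1 * z / (2 * ((M + 1 + j : ℕ) : ℝ) + 3)) ^ (M + 1 + j) := by
    intro j
    have : (0:ℝ) ≤ 2 * ((M + 1 + j : ℕ) : ℝ) + 1 := by positivity
    exact mul_nonneg (Real.rpow_nonneg this _)
      (pow_nonneg (div_nonneg hz' (by positivity)) _)
  have hsa : Summable (fun j : ℕ => (2 * ((M + 1 + j : ℕ) : ℝ) + 1) ^ ((3:ℝ)/2) *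
      (Real.exp 1 * z / (2 * ((M + 1 + j : ℕ) : ℝ) + 3)) ^ (M + 1 + j)) :=
    Summable.of_nonneg_of_le hnn key hgs
  have htsum : (∑' j:ℕ, (2 * ((M + 1 + j : ℕ) : ℝ) + 1) ^ ((3:ℝ)/2) *
      (Real.exp 1 * z / (2 * ((M + 1 + j : ℕ) : ℝ) + 3)) ^ (M + 1 + j)) ≤ C * (1 - r)⁻¹ := by
    calc (∑' j:ℕ, (2 * ((M + 1 + j : ℕ) : ℝ) + 1) ^ ((3:ℝ)/2) *
        (Real.exp 1 * z / (2 * ((M + 1 + j : ℕ) : ℝ) + 3)) ^ (M + 1 + j))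
        ≤ ∑' j:ℕ, C * r^j := Summable.tsum_le_tsum key hsa hgs
      _ = C * (1-r)⁻¹ := by rw [tsum_mul_left, tsum_geometric_of_lt_one hr0 hr1]
  -- bounds for the final estimate
  have hP0 : (0:ℝ) ≤ (S:ℝ) + 5 := by linarith
  have hℓr : (ℓ:ℝ) ≤ (S:ℝ) := by exact_mod_cast hℓ
  have hsqrtP : Real.sqrt (2*(ℓ:ℝ)+1) ≤ Real.sqrt 2 * Real.sqrt ((S:ℝ)+5) := by
    rw [← Real.sqrt_mul (by norm_num : (0:ℝ) ≤ 2)]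
    apply Real.sqrt_le_sqrt
    linarith
  have hx0P : x0 ^ ((3:ℝ)/2) ≤ ((S:ℝ)+5) ^ ((3:ℝ)/2) :=
    Real.rpow_le_rpow hx0n (by rw [hx0def]; linarith) (by norm_num)
  have hPsplit : ((S:ℝ)+5) ^ ((3:ℝ)/2) = ((S:ℝ)+5) * Real.sqrt ((S:ℝ)+5) := by
    rw [show ((3:ℝ)/2) = 1 + 1/2 by norm_num, Real.rpow_add (by linarith), Real.rpow_one,
      Real.sqrt_eq_rpow]
  have hρbound : ρ ^ (M+1) ≤ (2:ℝ) ^ (-(S:ℝ)/2) * Real.exp (-(8/5)) := by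
    have hsplit : ρ = (1/2) * ((S:ℝ)/((S:ℝ)+4)) := by rw [hρdef]; ring
    rw [hsplit, mul_pow]
    have hh1 : ((1:ℝ)/2) ^ (M+1) ≤ (2:ℝ) ^ (-(S:ℝ)/2) := by
      have he : ((1:ℝ)/2) ^ (M+1) = (2:ℝ) ^ (-(((M+1:ℕ)):ℝ)) := by
        rw [Real.rpow_neg (by norm_num), Real.rpow_natCast, one_div, inv_pow]
      rw [he]
      apply Real.rpow_le_rpow_of_exponent_le (by norm_num)
      push_cast; linarith
    have hh2 : ((S:ℝ)/((S:ℝ)+4)) ^ (M+1) ≤ Real.exp (-(8/5)) := by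
      have hp : (0:ℝ) < (S:ℝ)+4 := by linarith
      have hb : (S:ℝ)/((S:ℝ)+4) ≤ Real.exp (-(4/((S:ℝ)+4))) := by
        have h := Real.add_one_le_exp (-(4/((S:ℝ)+4)))
        have he : (S:ℝ)/((S:ℝ)+4) = -(4/((S:ℝ)+4)) + 1 := by field_simp; ring
        rw [he]; exact h
      calc ((S:ℝ)/((S:ℝ)+4)) ^ (M+1) ≤ (Real.exp (-(4/((S:ℝ)+4)))) ^ (M+1) :=
            pow_le_pow_left₀ (by positivity) hb _
        _ = Real.exp (((M+1:ℕ):ℝ) * (-(4/((S:ℝ)+4)))) := by rw [← Real.exp_nat_mul]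
        _ ≤ Real.exp (-(8/5)) := by
            apply Real.exp_le_exp.mpr
            have h85 : (8:ℝ)/5 ≤ ((M+1:ℕ):ℝ) * (4/((S:ℝ)+4)) := by
              rw [show ((M+1:ℕ):ℝ) * (4/((S:ℝ)+4)) = (4*((M:ℝ)+1))/((S:ℝ)+4) by
                push_cast; ring, le_div_iff₀ hp]
              linarith
            have he : ((M+1:ℕ):ℝ) * (-(4/((S:ℝ)+4))) = -(((M+1:ℕ):ℝ) * (4/((S:ℝ)+4))) := by ring
            rw [he]; linarith
    exact mul_le_mul hh1 hh2 (pow_nonneg (by positivity) _) (Real.rpow_nonneg (by norm_num) _)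
  have h1r : (0:ℝ) < 1 - r := by rw [hrdef]; nlinarith
  have hinv : (1-r)⁻¹ ≤ 3.415 := by
    rw [← one_div, div_le_iff₀ h1r]; rw [hrdef] at *; nlinarith
  have hCbound : C * (1-r)⁻¹ ≤
      ((((S:ℝ)+5) * Real.sqrt ((S:ℝ)+5)) * ((2:ℝ)^(-(S:ℝ)/2) * Real.exp (-(8/5)))) * 3.415 := by
    apply mul_le_mul _ hinv (by positivity) (by positivity)
    rw [hCdef, ← hPsplit] at *
    exact mul_le_mul hx0P hρbound (pow_nonneg hρ0 _) (Real.rpow_nonneg hP0 _)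
  have hP2 : ((S:ℝ)+5)^(2:ℕ) ≤ 25 * (2:ℝ)^((S:ℝ)/4) := by
    have h8 := pow8_aux S hS
    have hrp : ((2:ℝ)^((S:ℝ)/4))^(4:ℕ) = (2:ℝ)^(S:ℕ) := by
      rw [← Real.rpow_natCast ((2:ℝ)^((S:ℝ)/4)) 4, ← Real.rpow_mul (by norm_num),
        show (S:ℝ)/4 * ((4:ℕ):ℝ) = ((S:ℕ):ℝ) by push_cast; ring, Real.rpow_natCast]
    have h4 : (((S:ℝ)+5)^(2:ℕ))^(4:ℕ) ≤ (25 * (2:ℝ)^((S:ℝ)/4))^(4:ℕ) := by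
      rw [mul_pow, hrp, ← pow_mul]
      calc ((S:ℝ)+5)^(2*4) = ((S:ℝ)+5)^8 := by norm_num
        _ ≤ 390625 * 2^S := h8
        _ = 25^(4:ℕ) * 2^S := by norm_num
    exact le_of_pow_le_pow_left₀ (by norm_num) (by positivity) h4
  have hexp : Real.exp (-(8/5)) ≤ (4.5949729863572161:ℝ)⁻¹ := by
    have h1 : (1.1:ℝ)^(16:ℕ) ≤ Real.exp (8/5) := by
      have h2 : (1.1:ℝ) ≤ Real.exp (1/10) := by
        have := Real.add_one_le_exp (1/10:ℝ); linarith
      calc (1.1:ℝ)^(16:ℕ) ≤ (Real.exp (1/10))^(16:ℕ) := pow_le_pow_left₀ (by norm_num) h2 _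
        _ = Real.exp (((16:ℕ):ℝ) * (1/10)) := by rw [Real.exp_nat_mul]
        _ = Real.exp (8/5) := by norm_num
    rw [Real.exp_neg]
    apply inv_anti₀ (by norm_num)
    calc (4.5949729863572161:ℝ) = (1.1:ℝ)^(16:ℕ) := by norm_num
      _ ≤ Real.exp (8/5) := h1
  -- assemble
  have hfinal : 28 / 27 * Real.sqrt (2 * (ℓ:ℝ) + 1) *
      (∑' j:ℕ, (2 * ((M + 1 + j : ℕ) : ℝ) + 1) ^ ((3:ℝ)/2) *
        (Real.exp 1 * z / (2 * ((M + 1 + j : ℕ) : ℝ) + 3)) ^ (M + 1 + j)) ≤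
      28/27 * (Real.sqrt 2 * Real.sqrt ((S:ℝ)+5)) *
        (((((S:ℝ)+5) * Real.sqrt ((S:ℝ)+5)) * ((2:ℝ)^(-(S:ℝ)/2) * Real.exp (-(8/5)))) * 3.415) := by
    apply mul_le_mul _ (le_trans htsum hCbound) (tsum_nonneg hnn) (by positivity)
    apply mul_le_mul_of_nonneg_left hsqrtP (by norm_num)
  have hself : Real.sqrt ((S:ℝ)+5) * Real.sqrt ((S:ℝ)+5) = (S:ℝ)+5 :=
    Real.mul_self_sqrt hP0
  have hXY : (0:ℝ) < (2:ℝ)^((S:ℝ)/4) * (2:ℝ)^(-(S:ℝ)/2) := by positivity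
  have hexp' : Real.exp (-(8/5)) ≤ 0.21764 := le_trans hexp (by norm_num)
  have hA : 28/27 * 3.415 * Real.sqrt 2 * Real.exp (-(8/5)) ≤ 27.6/25 := by
    have hprod : Real.sqrt 2 * Real.exp (-(8/5)) ≤ 1.41422 * 0.21764 :=
      mul_le_mul hsqrt2 hexp' (le_of_lt (Real.exp_pos _)) (by norm_num)
    nlinarith [hprod]
  calc 28 / 27 * Real.sqrt (2 * (ℓ:ℝ) + 1) *
      (∑' j:ℕ, (2 * ((M + 1 + j : ℕ) : ℝ) + 1) ^ ((3:ℝ)/2) *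
        (Real.exp 1 * z / (2 * ((M + 1 + j : ℕ) : ℝ) + 3)) ^ (M + 1 + j))
      ≤ 28/27 * (Real.sqrt 2 * Real.sqrt ((S:ℝ)+5)) *
        (((((S:ℝ)+5) * Real.sqrt ((S:ℝ)+5)) * ((2:ℝ)^(-(S:ℝ)/2) * Real.exp (-(8/5)))) * 3.415) := hfinal
    _ = (28/27 * 3.415 * Real.sqrt 2 * Real.exp (-(8/5))) * (((S:ℝ)+5)^(2:ℕ) * (2:ℝ)^(-(S:ℝ)/2)) := by
        rw [sq]
        linear_combination (28/27 * 3.415 * Real.sqrt 2 * Real.exp (-(8/5)) *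
          (2:ℝ)^(-(S:ℝ)/2) * ((S:ℝ)+5)) * hself
    _ ≤ (28/27 * 3.415 * Real.sqrt 2 * Real.exp (-(8/5))) * ((25 * (2:ℝ)^((S:ℝ)/4)) * (2:ℝ)^(-(S:ℝ)/2)) := by
        apply mul_le_mul_of_nonneg_left _ (by positivity)
        exact mul_le_mul_of_nonneg_right hP2 (by positivity)
    _ ≤ (27.6/25) * ((25 * (2:ℝ)^((S:ℝ)/4)) * (2:ℝ)^(-(S:ℝ)/2)) := by
        apply mul_le_mul_of_nonneg_right hA (by positivity)
    _ = 27.6 * ((2:ℝ)^((S:ℝ)/4) * (2:ℝ)^(-(S:ℝ)/2)) := by ring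
    _ = 27.6 * (2:ℝ) ^ (-(S : ℝ) / 4) := by
        rw [← Real.rpow_add (by norm_num : (0:ℝ) < 2)]
        ring_nf


end
end

section
/- Let S ≥ 1 be an integer and let w_s, s = 0,…,S, be the spherical quadrature weights of order S. Then 0 ≤ w_s ≤ 8π/S² for every s ∈ {0,…,S}. -/
noncomputable section

open MeasureTheory Finset Real

/-- The spherical quadrature weights satisfy `0 ≤ w_s ≤ 8π/S²`. -/
theorem quadW_bounds (S : ℕ) (hS : 1 ≤ S) :
    ∀ s ≤ S, 0 ≤ quadW S s ∧ quadW S s ≤ 8 * Real.pi / (S : ℝ) ^ 2 := by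
  intro s hs
  have hSpos : (0:ℝ) < (S:ℝ) := by exact_mod_cast hS
  set M := S / 2 with hM
  set f : ℕ → ℝ := fun u =>
    2 * quadEps S u / (1 - 4 * (u:ℝ)^2) * Real.cos (2*Real.pi*s*u/S) with hf
  have hf0 : f 0 = 1 := by simp [hf, quadEps]
  set g : ℕ → ℝ := fun u => 1 / (2*(u:ℝ)+1) with hg
  have hrest : |∑ u ∈ Finset.range M, f (u+1)| ≤ 1 := by
    calc |∑ u ∈ Finset.range M, f (u+1)|
        ≤ ∑ u ∈ Finset.range M, |f (u+1)| := Finset.abs_sum_le_sum_abs _ _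
      _ ≤ ∑ u ∈ Finset.range M, (g u - g (u+1)) := by
          apply Finset.sum_le_sum
          intro u hu
          have humem : u < M := Finset.mem_range.mp hu
          have hu1 : u + 1 ≠ 0 := by omega
          have hu2 : u + 1 ≠ S := by omega
          have hq : quadEps S (u+1) = 1 := by simp [quadEps, hu1, hu2]
          have hc : ((u:ℝ)+1)^2 ≥ 1 := by nlinarith [Nat.cast_nonneg (α := ℝ) u]
          have hden : (0:ℝ) < 4 * ((u:ℝ)+1)^2 - 1 := by nlinarith
          have habs : |f (u+1)| ≤ 2 / (4 * ((u:ℝ)+1)^2 - 1) := by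
            have : f (u+1) = 2 / (1 - 4 * ((u:ℝ)+1)^2) *
                Real.cos (2*Real.pi*s*(u+1)/S) := by
              simp only [hf, hq]
              push_cast
              ring
            rw [this, abs_mul, abs_div]
            have h1 : |(2:ℝ)| = 2 := by norm_num
            have h2 : |(1:ℝ) - 4 * ((u:ℝ)+1)^2| = 4 * ((u:ℝ)+1)^2 - 1 := by
              rw [abs_of_nonpos (by linarith)]; ring
            rw [h1, h2]
            have := abs_cos_le_one (2*Real.pi*s*(u+1)/S)
            have hpos : (0:ℝ) < 2 / (4 * ((u:ℝ)+1)^2 - 1) := by positivity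
            calc 2 / (4 * ((u:ℝ)+1)^2 - 1) * |Real.cos (2*Real.pi*↑s*(↑u+1)/↑S)|
                ≤ 2 / (4 * ((u:ℝ)+1)^2 - 1) * 1 := by
                  apply mul_le_mul_of_nonneg_left this (le_of_lt hpos)
              _ = 2 / (4 * ((u:ℝ)+1)^2 - 1) := by ring
          have heq : g u - g (u+1) = 2 / (4 * ((u:ℝ)+1)^2 - 1) := by
            simp only [hg]
            push_cast
            have h1 : (2*(u:ℝ)+1) ≠ 0 := by positivity
            have h2 : (2*((u:ℝ)+1)+1) ≠ 0 := by positivity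
            have h3 : (4 * ((u:ℝ)+1)^2 - 1) ≠ 0 := ne_of_gt hden
            rw [div_sub_div _ _ h1 h2, div_eq_div_iff (mul_ne_zero h1 h2) h3]
            ring
          rw [heq]; exact habs
      _ = g 0 - g M := Finset.sum_range_sub' g M
      _ ≤ 1 := by
          have : 0 < g M := by simp only [hg]; positivity
          simp only [hg]
          norm_num
          positivity
  set R := ∑ u ∈ Finset.range M, f (u+1) with hR
  obtain ⟨hR1, hR2⟩ := abs_le.mp hrest
  have hTsplit : ∑ u ∈ Finset.range (M+1), f u = R + 1 := by
    rw [Finset.sum_range_succ' f M, hf0]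
  have hT0 : 0 ≤ ∑ u ∈ Finset.range (M+1), f u := by rw [hTsplit]; linarith
  have hT2 : ∑ u ∈ Finset.range (M+1), f u ≤ 2 := by rw [hTsplit]; linarith
  have hε1 : quadEps S s ≤ 1 := by unfold quadEps; split_ifs <;> norm_num
  have hε0 : 0 < quadEps S s := by unfold quadEps; split_ifs <;> norm_num
  have hw : quadW S s = 4 * Real.pi * quadEps S s / (S:ℝ)^2 *
      ∑ u ∈ Finset.range (M+1), f u := by
    rw [quadW, hM, hf]
  constructor
  · rw [hw]
    apply mul_nonneg _ hT0
    positivity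
  · rw [hw]
    have hc : 0 < 4 * Real.pi / (S:ℝ)^2 := by positivity
    have h1 : quadEps S s * (∑ u ∈ Finset.range (M+1), f u) ≤ 2 := by
      nlinarith
    calc 4 * Real.pi * quadEps S s / (S:ℝ)^2 * ∑ u ∈ Finset.range (M+1), f u
        = (4 * Real.pi / (S:ℝ)^2) * (quadEps S s * ∑ u ∈ Finset.range (M+1), f u) := by
          ring
      _ ≤ (4 * Real.pi / (S:ℝ)^2) * 2 := by
          apply mul_le_mul_of_nonneg_left h1 (le_of_lt hc)
      _ = 8 * Real.pi / (S:ℝ)^2 := by ring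

end
end

section
/- Let S ≥ 1 be an integer and let w_s, s = 0,…,S, be the spherical quadrature weights of order S. Then Σ_{s=0}^{S} Σ_{t=0}^{S−1} w_s = 4π, i.e. S · Σ_{s=0}^{S} w_s = 4π. -/
noncomputable section

open MeasureTheory Finset Real

lemma sum_cos_zero {S u : ℕ} (hu : 0 < u) (huS : u < S) :
    ∑ s ∈ Finset.range S, Real.cos (2 * Real.pi * s * u / S) = 0 := by
  have hS : (0:ℝ) < S := by exact_mod_cast hu.trans huS
  have hSC : (S:ℂ) ≠ 0 := by exact_mod_cast hS.ne'
  set ζ : ℂ := Complex.exp (((2 * Real.pi * u / S : ℝ)) * Complex.I) with hζdef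
  have hζ : ∀ s : ℕ, Complex.exp (((2 * Real.pi * s * u / S : ℝ)) * Complex.I) = ζ ^ s := by
    intro s
    rw [hζdef, ← Complex.exp_nat_mul]
    congr 1
    push_cast
    ring
  have hζS : ζ ^ S = 1 := by
    rw [hζdef, ← Complex.exp_nat_mul, Complex.exp_eq_one_iff]
    refine ⟨u, ?_⟩
    push_cast
    field_simp
  have hζ1 : ζ ≠ 1 := by
    rw [hζdef, Ne, Complex.exp_eq_one_iff]
    push_neg
    intro n hn
    have h2 : (2 * Real.pi * u / S : ℝ) = n * (2 * Real.pi) := by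
      have h1 : ((2 * Real.pi * u / S : ℝ) : ℂ) * Complex.I
          = ((n * (2 * Real.pi) : ℝ) : ℂ) * Complex.I := by
        rw [hn]; push_cast; ring
      exact_mod_cast mul_right_cancel₀ Complex.I_ne_zero h1
    have h3 : (u : ℝ) = n * S := by
      field_simp at h2
      nlinarith [Real.pi_pos]
    have hn0' : (0:ℝ) < (n:ℝ) := by nlinarith [hu.trans huS, (by exact_mod_cast hu : (0:ℝ) < (u:ℝ))]
    have hn1 : (1:ℝ) ≤ (n:ℝ) := by
      exact_mod_cast (by exact_mod_cast hn0' : (0:ℤ) < n)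
    have huS' : (u:ℝ) < S := by exact_mod_cast huS
    nlinarith
  have key : ∑ s ∈ Finset.range S, Complex.exp (((2 * Real.pi * s * u / S : ℝ)) * Complex.I) = 0 := by
    simp_rw [hζ]
    rw [geom_sum_eq hζ1, hζS]
    simp
  have hc : ∀ s : ℕ, Real.cos (2 * Real.pi * s * u / S)
      = (Complex.exp (((2 * Real.pi * s * u / S : ℝ)) * Complex.I)).re :=
    fun s => (Complex.exp_ofReal_mul_I_re _).symm
  simp_rw [hc, ← Complex.re_sum, key, Complex.zero_re]

lemma eps_cos_sum (S u : ℕ) (hS : 1 ≤ S) :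
    ∑ s ∈ Finset.range (S + 1), quadEps S s * Real.cos (2 * Real.pi * s * u / S)
      = ∑ s ∈ Finset.range S, Real.cos (2 * Real.pi * s * u / S) := by
  have hS0 : (S:ℝ) ≠ 0 := by positivity
  have hcS : Real.cos (2 * Real.pi * S * u / S) = 1 := by
    have : 2 * Real.pi * S * u / S = u * (2 * Real.pi) := by field_simp
    rw [this, Real.cos_nat_mul_two_pi]
  have hsub : ∑ s ∈ Finset.range S,
      (quadEps S s * Real.cos (2 * Real.pi * s * u / S)
        - Real.cos (2 * Real.pi * s * u / S)) = -(1/2) := by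
    rw [Finset.sum_eq_single 0]
    · norm_num [quadEps]
    · intro b hb hb0
      have hbS : b ≠ S := (Finset.mem_range.mp hb).ne
      simp [quadEps, hb0, hbS]
    · intro h
      exact absurd (Finset.mem_range.mpr hS) h
  rw [Finset.sum_range_succ]
  rw [Finset.sum_sub_distrib] at hsub
  have hεS : quadEps S S = 1/2 := by simp [quadEps]
  rw [hεS, hcS]
  linarith

/-- `Σ_{s=0}^{S} Σ_{t=0}^{S-1} w_s = 4π`, i.e. `S · Σ_{s=0}^{S} w_s = 4π`. -/
theorem quadW_sum (S : ℕ) (hS : 1 ≤ S) :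
    (S : ℝ) * ∑ s ∈ Finset.range (S + 1), quadW S s = 4 * Real.pi := by
  have hS0 : (S:ℝ) ≠ 0 := by positivity
  have h1 : ∑ s ∈ Finset.range (S + 1), quadW S s
      = ∑ u ∈ Finset.range (S / 2 + 1), 2 * quadEps S u / (1 - 4 * (u : ℝ) ^ 2)
          * (4 * Real.pi / (S:ℝ)^2)
          * ∑ s ∈ Finset.range S, Real.cos (2 * Real.pi * s * u / S) := by
    unfold quadW
    simp_rw [Finset.mul_sum]
    rw [Finset.sum_comm]
    refine Finset.sum_congr rfl fun u _ => ?_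
    calc ∑ x ∈ Finset.range (S+1),
          4 * Real.pi * quadEps S x / (S:ℝ)^2 *
            (2 * quadEps S u / (1 - 4 * (u:ℝ)^2) * Real.cos (2 * Real.pi * x * u / S))
        = (2 * quadEps S u / (1 - 4 * (u:ℝ)^2) * (4 * Real.pi / (S:ℝ)^2)) *
            ∑ x ∈ Finset.range (S+1), quadEps S x * Real.cos (2 * Real.pi * x * u / S) := by
          rw [Finset.mul_sum]
          exact Finset.sum_congr rfl fun s _ => by ring
      _ = (2 * quadEps S u / (1 - 4 * (u:ℝ)^2) * (4 * Real.pi / (S:ℝ)^2)) *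
            ∑ x ∈ Finset.range S, Real.cos (2 * Real.pi * x * u / S) := by
          rw [eps_cos_sum S u hS]
      _ = _ := by rw [Finset.mul_sum]
  rw [h1, Finset.sum_eq_single 0]
  · simp only [Nat.cast_zero, mul_zero, zero_div, Real.cos_zero]
    rw [Finset.sum_const, Finset.card_range, nsmul_eq_mul]
    have hε0 : quadEps S 0 = 1/2 := by simp [quadEps]
    rw [hε0]
    field_simp
    ring
  · intro u hu hu0
    have huS : u < S := lt_of_le_of_lt (Nat.lt_succ_iff.mp (Finset.mem_range.mp hu))
      (Nat.div_lt_self hS Nat.one_lt_two)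
    rw [sum_cos_zero (Nat.pos_of_ne_zero hu0) huS, mul_zero]
  · intro h
    exact absurd (Finset.mem_range.mpr (Nat.succ_pos _)) h


end
end

section
/- For every η ∈ (0,1], every real V ≥ 1, and every integer Q with Q ≥ max{ 5.3 V^{1/3}, log₂(1/η) }, one has (1/(√(8Q) π)) · ( (e/Q) · ((√3 π/16)^{2/3}) · (V^{1/3} + 1) )^{Q} ≤ η. -/
noncomputable section

open MeasureTheory Finset Real

set_option maxHeartbeats 1000000 in
/-- For `η ∈ (0,1]`, `V ≥ 1` and `Q ≥ max{5.3 V^{1/3}, log₂(1/η)}`,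
`(1/(√(8Q)π)) ((e/Q)(√3π/16)^{2/3}(V^{1/3}+1))^Q ≤ η`. -/
theorem stirling_residual_bound (η : ℝ) (hη0 : 0 < η) (hη1 : η ≤ 1)
    (V : ℝ) (hV : 1 ≤ V) (Q : ℕ)
    (hQ : max (5.3 * V ^ ((1:ℝ)/3)) (Real.logb 2 (1/η)) ≤ (Q : ℝ)) :
    1 / (Real.sqrt (8 * Q) * Real.pi) *
      (Real.exp 1 / Q * (Real.sqrt 3 * Real.pi / 16) ^ ((2:ℝ)/3) *
        (V ^ ((1:ℝ)/3) + 1)) ^ Q ≤ η := by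
  have hπ := Real.pi_gt_d6
  have hπ' := Real.pi_lt_d6
  have he1 : Real.exp 1 < 2.7182818286 := Real.exp_one_lt_d9
  have he0 : (0:ℝ) < Real.exp 1 := Real.exp_pos 1
  have hx : (1:ℝ) ≤ V ^ ((1:ℝ)/3) := Real.one_le_rpow hV (by norm_num)
  set x := V ^ ((1:ℝ)/3) with hxdef
  have hQx : 5.3 * x ≤ (Q : ℝ) := le_trans (le_max_left _ _) hQ
  have hQ53 : (5.3:ℝ) ≤ (Q : ℝ) := by nlinarith
  have hQ0 : (0:ℝ) < (Q : ℝ) := by linarith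
  -- the constant c = (√3 π /16)^(2/3)
  set a : ℝ := Real.sqrt 3 * Real.pi / 16 with hadef
  have ha : 0 ≤ a := by
    have := Real.sqrt_nonneg 3
    have := Real.pi_pos
    positivity
  set c : ℝ := a ^ ((2:ℝ)/3) with hcdef
  have hc0 : 0 ≤ c := Real.rpow_nonneg ha _
  set b : ℝ := 5.3 / (4 * Real.exp 1) with hbdef
  have hb : 0 < b := by positivity
  have hcb : c ≤ b := by
    have h3 : c ^ (3:ℕ) = a ^ (2:ℕ) := by
      rw [hcdef, ← Real.rpow_natCast (a ^ ((2:ℝ)/3)) 3, ← Real.rpow_mul ha,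
        ← Real.rpow_natCast a 2]
      norm_num
    have ha2 : a ^ (2:ℕ) = 3 * Real.pi ^ 2 / 256 := by
      rw [hadef]
      have : Real.sqrt 3 ^ 2 = 3 := Real.sq_sqrt (by norm_num)
      field_simp
      nlinarith [this]
    have hkey : a ^ (2:ℕ) ≤ b ^ (3:ℕ) := by
      rw [ha2, hbdef]
      rw [div_pow, div_le_div_iff₀ (by norm_num) (by positivity)]
      have hE3 : Real.exp 1 ^ 3 < 2.7182818286 ^ 3 := by
        apply pow_lt_pow_left₀ he1 (le_of_lt he0)
        norm_num
      nlinarith [sq_nonneg Real.pi, mul_pos (mul_pos he0 he0) he0]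
    have := h3 ▸ hkey
    exact le_of_pow_le_pow_left₀ (by norm_num) hb.le this
  -- the base is ≤ 1/2
  have hbase : Real.exp 1 / Q * c * (x + 1) ≤ 1/2 := by
    rw [div_mul_eq_mul_div, div_mul_eq_mul_div, div_le_iff₀ hQ0]
    have h1 : Real.exp 1 * c * (x + 1) ≤ Real.exp 1 * b * (2 * x) := by
      have hcx : c * (x+1) ≤ b * (2*x) := by nlinarith
      calc Real.exp 1 * c * (x + 1) = Real.exp 1 * (c * (x+1)) := by ring
        _ ≤ Real.exp 1 * (b * (2*x)) := by
            exact mul_le_mul_of_nonneg_left hcx he0.le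
        _ = Real.exp 1 * b * (2*x) := by ring
    have h2 : Real.exp 1 * b * (2 * x) = 2.65 * x := by
      rw [hbdef]; field_simp; ring
    nlinarith
  have hbase0 : 0 ≤ Real.exp 1 / Q * c * (x + 1) := by positivity
  -- pow bound
  have hpow : (Real.exp 1 / Q * c * (x + 1)) ^ Q ≤ (1/2:ℝ) ^ Q :=
    pow_le_pow_left₀ hbase0 hbase Q
  -- the prefactor is ≤ 1
  have hpre : 1 / (Real.sqrt (8 * Q) * Real.pi) ≤ 1 := by
    have hs : (1:ℝ) ≤ Real.sqrt (8 * Q) :=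
      calc (1:ℝ) = Real.sqrt 1 := Real.sqrt_one.symm
        _ ≤ Real.sqrt (8 * Q) := Real.sqrt_le_sqrt (by linarith)
    have h1 : (1:ℝ) ≤ Real.sqrt (8 * Q) * Real.pi :=
      le_trans hs (le_mul_of_one_le_right (le_trans zero_le_one hs) (by linarith))
    rw [div_le_one (by linarith)]; exact h1
  have hpre0 : 0 < 1 / (Real.sqrt (8 * Q) * Real.pi) := by
    have hs : (1:ℝ) ≤ Real.sqrt (8 * Q) :=
      calc (1:ℝ) = Real.sqrt 1 := Real.sqrt_one.symm
        _ ≤ Real.sqrt (8 * Q) := Real.sqrt_le_sqrt (by linarith)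
    have := Real.pi_pos
    positivity
  -- (1/2)^Q ≤ η
  have hhalf : (1/2:ℝ) ^ Q ≤ η := by
    have hlog : Real.logb 2 (1/η) ≤ (Q:ℝ) := le_trans (le_max_right _ _) hQ
    have h2Q : 1/η ≤ (2:ℝ) ^ (Q:ℝ) := by
      calc 1/η = (2:ℝ) ^ Real.logb 2 (1/η) :=
            (Real.rpow_logb (by norm_num) (by norm_num) (by positivity)).symm
        _ ≤ (2:ℝ) ^ (Q:ℝ) := Real.rpow_le_rpow_of_exponent_le (by norm_num) hlog
    rw [Real.rpow_natCast] at h2Q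
    have h2Q0 : (0:ℝ) < (2:ℝ) ^ Q := by positivity
    have : (1/2:ℝ) ^ Q = ((2:ℝ) ^ Q)⁻¹ := by rw [one_div, inv_pow]
    rw [this, inv_le_comm₀ h2Q0 hη0]
    rwa [one_div] at h2Q
  calc 1 / (Real.sqrt (8 * Q) * Real.pi) *
      (Real.exp 1 / Q * c * (x + 1)) ^ Q
      ≤ 1 * ((1/2:ℝ) ^ Q) := by
        apply mul_le_mul hpre hpow (by positivity) (by norm_num)
    _ = (1/2:ℝ) ^ Q := one_mul _
    _ ≤ η := hhalf

end
end
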